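/- arXiv:2003.00296 — 4 statements merged into one kernel-verified Lean document; each statement's English description precedes it below -/
import Mathlib

section
/- Fairness of the coin-flipping game for uniformly random flips: under the infinite product measure μ = ⨂_{n∈ℕ} Bernoulli(1/2) on ℕ → Bool, the event that player A wins the game, namely {ω : ℕ → Bool | ∃ n, ω n = ω (n+1), and at the least such index n one has ω n = true}, has μ-measure exactly 1/2. -/
open MeasureTheory

def IsFairBernoulliProduct (μ : Measure (ℕ → Bool)) : Prop :=
  ∀ (s : Finset ℕ) (f : ℕ → Bool),
    μ {ω | ∀ i ∈ s, ω i = f i} = (1 / 2 : ENNReal) ^ s.card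

def AWins (ω : ℕ → Bool) : Prop :=
  ∃ h : ∃ n : ℕ, ω n = ω (n + 1), ω (Nat.find h) = true

namespace FairGameAux

/-- The collection of cylinder sets. -/
def Cyl : Set (Set (ℕ → Bool)) :=
  {S | ∃ (s : Finset ℕ) (f : ℕ → Bool), S = {ω | ∀ i ∈ s, ω i = f i}}

lemma meas_coord (n : ℕ) (b : Bool) : MeasurableSet {ω : ℕ → Bool | ω n = b} := by
  have h : {ω : ℕ → Bool | ω n = b} = (fun ω : ℕ → Bool => ω n) ⁻¹' {b} := by ext; simp
  rw [h]; exact measurable_pi_apply n (by trivial)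

lemma meas_eq (n m : ℕ) : MeasurableSet {ω : ℕ → Bool | ω n = ω m} := by
  have h : {ω : ℕ → Bool | ω n = ω m} =
      ({ω | ω n = true} ∩ {ω | ω m = true}) ∪ ({ω | ω n = false} ∩ {ω | ω m = false}) := by
    ext ω
    rcases Bool.eq_false_or_eq_true (ω n) with h1 | h1 <;>
      rcases Bool.eq_false_or_eq_true (ω m) with h2 | h2 <;> simp [h1, h2]
  rw [h]
  exact ((meas_coord n true).inter (meas_coord m true)).union
    ((meas_coord n false).inter (meas_coord m false))

lemma meas_cyl {S : Set (ℕ → Bool)} (hS : S ∈ Cyl) : MeasurableSet S := by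
  obtain ⟨s, f, rfl⟩ := hS
  have h : {ω : ℕ → Bool | ∀ i ∈ s, ω i = f i} = ⋂ i ∈ s, {ω | ω i = f i} := by
    ext ω; simp
  rw [h]
  exact MeasurableSet.biInter s.countable_toSet fun i _ => meas_coord i (f i)

lemma cyl_piSystem : IsPiSystem Cyl := by
  rintro S ⟨s, f, rfl⟩ T ⟨t, g, rfl⟩ ⟨ω₀, hω₀⟩
  refine ⟨s ∪ t, fun i => if i ∈ s then f i else g i, ?_⟩
  obtain ⟨h₀s, h₀t⟩ := hω₀
  ext ω
  simp only [Set.mem_inter_iff, Set.mem_setOf_eq, Finset.mem_union]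
  constructor
  · rintro ⟨h1, h2⟩ i hi
    by_cases his : i ∈ s
    · simp [his, h1 i his]
    · rcases hi with hi | hi
      · exact absurd hi his
      · simp [his, h2 i hi]
  · intro h
    constructor
    · intro i hi
      have := h i (Or.inl hi)
      simpa [hi] using this
    · intro i hi
      by_cases his : i ∈ s
      · have := h i (Or.inl his)
        simp only [his, if_true] at this
        rw [this, ← h₀s i his, h₀t i hi]
      · have := h i (Or.inr hi)
        simpa [his] using this

lemma generate_cyl :
    (inferInstance : MeasurableSpace (ℕ → Bool)) = MeasurableSpace.generateFrom Cyl := by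
  refine le_antisymm ?_ (MeasurableSpace.generateFrom_le fun S hS => meas_cyl hS)
  rw [show (inferInstance : MeasurableSpace (ℕ → Bool)) = MeasurableSpace.pi from rfl,
    MeasurableSpace.pi]
  refine iSup_le fun i => ?_
  intro S hS
  obtain ⟨t, -, rfl⟩ := hS
  have h : (fun ω : ℕ → Bool => ω i) ⁻¹' t = ⋃ b ∈ t, {ω : ℕ → Bool | ω i = b} := by
    ext ω; simp
  rw [h]
  refine MeasurableSet.biUnion t.to_countable fun b _ => ?_
  refine MeasurableSpace.measurableSet_generateFrom ⟨{i}, fun _ => b, ?_⟩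
  ext ω; simp

lemma univ_cyl : (Set.univ : Set (ℕ → Bool)) = {ω | ∀ i ∈ (∅ : Finset ℕ), ω i = true} := by
  ext ω; simp

lemma meas_univ {μ : Measure (ℕ → Bool)} (hμ : IsFairBernoulliProduct μ) :
    μ Set.univ = 1 := by
  rw [univ_cyl, hμ ∅ (fun _ => true)]; simp

lemma unique {μ ν : Measure (ℕ → Bool)} (hμ : IsFairBernoulliProduct μ)
    (hν : IsFairBernoulliProduct ν) : μ = ν := by
  have hfin : IsFiniteMeasure μ := ⟨by rw [meas_univ hμ]; exact ENNReal.one_lt_top⟩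
  refine ext_of_generate_finite Cyl generate_cyl cyl_piSystem ?_ ?_
  · rintro S ⟨s, f, rfl⟩
    rw [hμ s f, hν s f]
  · rw [meas_univ hμ, meas_univ hν]

/-- bit-flip map -/
def neg (ω : ℕ → Bool) : ℕ → Bool := fun n => !ω n

lemma meas_neg : Measurable neg :=
  measurable_pi_lambda _ fun n => measurable_from_top.comp (measurable_pi_apply n)

lemma map_neg {μ : Measure (ℕ → Bool)} (hμ : IsFairBernoulliProduct μ) :
    μ.map neg = μ := by
  refine unique ?_ hμ
  intro s f
  rw [Measure.map_apply meas_neg (meas_cyl ⟨s, f, rfl⟩)]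
  have h : neg ⁻¹' {ω | ∀ i ∈ s, ω i = f i} = {ω | ∀ i ∈ s, ω i = !f i} := by
    ext ω
    simp only [Set.mem_preimage, Set.mem_setOf_eq, neg]
    constructor
    · intro h i hi; have := h i hi; rw [← this]; simp
    · intro h i hi; rw [h i hi]; simp
  rw [h, hμ s (fun i => !f i)]

def SA (n : ℕ) : Set (ℕ → Bool) :=
  {ω | ω n = ω (n + 1) ∧ ω n = true ∧ ∀ k < n, ω k ≠ ω (k + 1)}

def SB (n : ℕ) : Set (ℕ → Bool) :=
  {ω | ω n = ω (n + 1) ∧ ω n = false ∧ ∀ k < n, ω k ≠ ω (k + 1)}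

lemma meas_SA (n : ℕ) : MeasurableSet (SA n) := by
  have h : SA n = ({ω | ω n = ω (n+1)} ∩ {ω | ω n = true}) ∩
      ⋂ k ∈ Set.Iio n, {ω : ℕ → Bool | ω k = ω (k+1)}ᶜ := by
    ext ω
    simp only [SA, Set.mem_inter_iff, Set.mem_setOf_eq, Set.mem_iInter, Set.mem_compl_iff,
      Set.mem_Iio]
    tauto
  rw [h]
  exact ((meas_eq n (n+1)).inter (meas_coord n true)).inter
    (MeasurableSet.biInter (Set.to_countable _) fun k _ => (meas_eq k (k+1)).compl)

lemma meas_SB (n : ℕ) : MeasurableSet (SB n) := by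
  have h : SB n = ({ω | ω n = ω (n+1)} ∩ {ω | ω n = false}) ∩
      ⋂ k ∈ Set.Iio n, {ω : ℕ → Bool | ω k = ω (k+1)}ᶜ := by
    ext ω
    simp only [SB, Set.mem_inter_iff, Set.mem_setOf_eq, Set.mem_iInter, Set.mem_compl_iff,
      Set.mem_Iio]
    tauto
  rw [h]
  exact ((meas_eq n (n+1)).inter (meas_coord n false)).inter
    (MeasurableSet.biInter (Set.to_countable _) fun k _ => (meas_eq k (k+1)).compl)

lemma awins_eq : {ω : ℕ → Bool | AWins ω} = ⋃ n, SA n := by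
  ext ω
  simp only [Set.mem_setOf_eq, Set.mem_iUnion, AWins, SA]
  constructor
  · rintro ⟨h, htrue⟩
    exact ⟨Nat.find h, Nat.find_spec h, htrue, fun k hk => Nat.find_min h hk⟩
  · rintro ⟨n, h1, h2, h3⟩
    have h : ∃ n, ω n = ω (n + 1) := ⟨n, h1⟩
    refine ⟨h, ?_⟩
    have hn : Nat.find h = n := (Nat.find_eq_iff h).2 ⟨h1, fun m hm => h3 m hm⟩
    rw [hn]; exact h2

lemma neg_preimage : neg ⁻¹' (⋃ n, SA n) = ⋃ n, SB n := by
  ext ω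
  simp only [Set.mem_preimage, Set.mem_iUnion, SA, SB, Set.mem_setOf_eq, neg]
  constructor
  · rintro ⟨n, h1, h2, h3⟩
    refine ⟨n, by simpa using h1, by simpa using h2, fun k hk hkeq => h3 k hk (by rw [hkeq])⟩
  · rintro ⟨n, h1, h2, h3⟩
    refine ⟨n, by simp [h1], by simp [h2], fun k hk hkeq => h3 k hk (by simpa using hkeq)⟩

lemma disj : Disjoint (⋃ n, SA n) (⋃ n, SB n) := by
  rw [Set.disjoint_left]
  rintro ω hA hB
  simp only [Set.mem_iUnion, SA, SB, Set.mem_setOf_eq] at hA hB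
  obtain ⟨n, hn1, hn2, hn3⟩ := hA
  obtain ⟨m, hm1, hm2, hm3⟩ := hB
  rcases lt_trichotomy n m with h | h | h
  · exact hm3 n h hn1
  · rw [h] at hn2; rw [hn2] at hm2; exact absurd hm2 (by simp)
  · exact hn3 m h hm1

lemma union_eq : (⋃ n, SA n) ∪ (⋃ n, SB n) = {ω : ℕ → Bool | ∃ n, ω n = ω (n+1)} := by
  ext ω
  simp only [Set.mem_union, Set.mem_iUnion, SA, SB, Set.mem_setOf_eq]
  constructor
  · rintro (⟨n, h1, _, _⟩ | ⟨n, h1, _, _⟩) <;> exact ⟨n, h1⟩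
  · rintro ⟨n, hn⟩
    have h : ∃ n, ω n = ω (n + 1) := ⟨n, hn⟩
    set m := Nat.find h with hm
    have hspec : ω m = ω (m + 1) := Nat.find_spec h
    have hmin : ∀ k < m, ω k ≠ ω (k + 1) := fun k hk => Nat.find_min h hk
    rcases Bool.eq_false_or_eq_true (ω m) with hb | hb
    · exact Or.inl ⟨m, hspec, hb, hmin⟩
    · exact Or.inr ⟨m, hspec, hb, hmin⟩

/-- alternating pattern -/
def pat (b : Bool) (i : ℕ) : Bool := if Even i then b else !b

lemma alt_pat {ω : ℕ → Bool} (hω : ∀ n, ω n ≠ ω (n + 1)) : ∀ i, ω i = pat (ω 0) i := by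
  intro i
  induction i with
  | zero => simp [pat]
  | succ k ih =>
    have h1 : ω (k + 1) = !ω k := by
      have := hω k
      rcases Bool.eq_false_or_eq_true (ω k) with hb | hb <;>
        rcases Bool.eq_false_or_eq_true (ω (k+1)) with hb' | hb' <;>
        simp [hb, hb'] at this ⊢
    rw [h1, ih, pat, pat]
    rcases Nat.even_or_odd k with he | he
    · simp [he, Nat.even_add_one, Nat.not_even_iff_odd.2 (Even.add_one he)]
    · simp [Nat.not_even_iff_odd.2 he, Nat.even_add_one]

lemma null_alt {μ : Measure (ℕ → Bool)} (hμ : IsFairBernoulliProduct μ) :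
    μ {ω : ℕ → Bool | ∀ n, ω n ≠ ω (n + 1)} = 0 := by
  set E := {ω : ℕ → Bool | ∀ n, ω n ≠ ω (n + 1)}
  have key : ∀ k : ℕ, μ E ≤ (1 / 2 : ENNReal) ^ k := by
    intro k
    have hsub : E ⊆ {ω : ℕ → Bool | ∀ i ∈ Finset.range (k+1), ω i = pat true i} ∪
        {ω : ℕ → Bool | ∀ i ∈ Finset.range (k+1), ω i = pat false i} := by
      intro ω hω
      have halt := alt_pat hω
      rcases Bool.eq_false_or_eq_true (ω 0) with hb | hb
      · left; intro i _; rw [halt i, hb]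
      · right; intro i _; rw [halt i, hb]
    calc μ E ≤ μ ({ω : ℕ → Bool | ∀ i ∈ Finset.range (k+1), ω i = pat true i} ∪
        {ω : ℕ → Bool | ∀ i ∈ Finset.range (k+1), ω i = pat false i}) := measure_mono hsub
      _ ≤ μ {ω : ℕ → Bool | ∀ i ∈ Finset.range (k+1), ω i = pat true i} +
          μ {ω : ℕ → Bool | ∀ i ∈ Finset.range (k+1), ω i = pat false i} := measure_union_le _ _
      _ = (1/2 : ENNReal) ^ (k+1) + (1/2 : ENNReal) ^ (k+1) := by
          rw [hμ (Finset.range (k+1)) (pat true), hμ (Finset.range (k+1)) (pat false),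
            Finset.card_range]
      _ = (1/2 : ENNReal) ^ k := by
          rw [← two_mul, pow_succ, ← mul_assoc, mul_comm (2 : ENNReal), mul_assoc]
          have h2 : (2 : ENNReal) * (1 / 2) = 1 := by
            rw [one_div]; exact ENNReal.mul_inv_cancel two_ne_zero (by norm_num)
          rw [h2, mul_one]
  have htend : Filter.Tendsto (fun k : ℕ => (1/2 : ENNReal) ^ k) Filter.atTop (nhds 0) :=
    ENNReal.tendsto_pow_atTop_nhds_zero_of_lt_one (by norm_num)
  have : μ E ≤ 0 := ge_of_tendsto' htend key
  exact le_antisymm this zero_le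

end FairGameAux

open FairGameAux in
/-- Fairness of the coin-flipping game: under the infinite product of fair
Bernoulli measures, player A wins with probability exactly `1/2`. -/
theorem fair_game_is_fair
    (μ : Measure (ℕ → Bool)) (hμ : IsFairBernoulliProduct μ) :
    μ {ω : ℕ → Bool | AWins ω} = 1 / 2 := by
  have hA : MeasurableSet (⋃ n, SA n) := MeasurableSet.iUnion meas_SA
  have hB : MeasurableSet (⋃ n, SB n) := MeasurableSet.iUnion meas_SB
  have hAB : μ (⋃ n, SB n) = μ (⋃ n, SA n) := by
    rw [← neg_preimage, ← Measure.map_apply meas_neg hA, map_neg hμ]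
  have hD : μ ((⋃ n, SA n) ∪ (⋃ n, SB n)) = 1 := by
    rw [union_eq]
    have hcompl : {ω : ℕ → Bool | ∃ n, ω n = ω (n+1)}ᶜ
        = {ω : ℕ → Bool | ∀ n, ω n ≠ ω (n + 1)} := by
      ext ω; simp
    have hDm : MeasurableSet {ω : ℕ → Bool | ∃ n, ω n = ω (n+1)} := by
      have : {ω : ℕ → Bool | ∃ n, ω n = ω (n+1)} = ⋃ n, {ω : ℕ → Bool | ω n = ω (n+1)} := by
        ext ω; simp
      rw [this]; exact MeasurableSet.iUnion fun n => meas_eq n (n+1)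
    have := measure_add_measure_compl (μ := μ) hDm
    rw [hcompl, null_alt hμ, add_zero, meas_univ hμ] at this
    exact this
  rw [measure_union (Set.disjoint_right.mpr fun ω h1 h2 => (Set.disjoint_left.mp disj h2) h1) hB,
    hAB, ← two_mul] at hD
  have hval : μ (⋃ n, SA n) = 1 / 2 := by
    rw [ENNReal.eq_div_iff (by norm_num) (by norm_num), hD]
  rw [awins_eq, hval]
end

section
/- A per-flip advantage yields a game advantage: for every real r with 1/2 ≤ r ≤ 1, under the infinite product measure μ_r = ⨂_{n∈ℕ} Bernoulli(r) on ℕ → Bool, the event that player A wins the game, namely {ω : ℕ → Bool | ∃ n, ω n = ω (n+1), and at the least such index n one has ω n = true}, has μ_r-measure at least 1/2. -/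
open MeasureTheory ENNReal

/-- `μ` is the infinite product measure `⨂_{n ∈ ℕ} Bernoulli(r)` on `ℕ → Bool`:
it is characterized by its values on cylinder sets, where each fixed coordinate
contributes a factor `r` (if fixed to `true`) or `1 - r` (if fixed to `false`). -/
def IsBernoulliProduct (r : ℝ) (μ : Measure (ℕ → Bool)) : Prop :=
  ∀ (s : Finset ℕ) (f : ℕ → Bool),
    μ {ω | ∀ i ∈ s, ω i = f i} =
      ∏ i ∈ s, (if f i then ENNReal.ofReal r else ENNReal.ofReal (1 - r))

namespace PerFlipAux

/-- Alternating pattern ending in two `true`s at positions `n, n+1`. -/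
def pat (n i : ℕ) : Bool := decide ((n - i) % 2 = 0)

lemma pat_self (n : ℕ) : pat n n = true := by simp [pat]

lemma pat_succ_self (n : ℕ) : pat n (n+1) = true := by simp [pat]

lemma pat_ne (n k : ℕ) (hk : k < n) : pat n k ≠ pat n (k+1) := by
  simp only [pat, ne_eq, decide_eq_decide]
  omega

def Cyl (n : ℕ) : Set (ℕ → Bool) :=
  {ω | ∀ i ∈ Finset.range (n+2), ω i = pat n i}

lemma measurableSet_cyl (n : ℕ) : MeasurableSet (Cyl n) := by
  have : Cyl n = ⋂ i ∈ Finset.range (n+2), (fun ω : ℕ → Bool => ω i) ⁻¹' {pat n i} := by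
    ext ω; simp [Cyl]
  rw [this]
  exact MeasurableSet.biInter (Finset.range (n+2)).countable_toSet
    (fun i _ => (measurable_pi_apply i) (measurableSet_singleton (pat n i)))

lemma mem_cyl {n : ℕ} {ω : ℕ → Bool} (h : ω ∈ Cyl n) :
    (∀ i ≤ n + 1, ω i = pat n i) := by
  intro i hi
  exact h i (Finset.mem_range.mpr (by omega))

lemma cyl_disjoint : Pairwise (Function.onFun Disjoint Cyl) := by
  have key : ∀ m n, m < n → Disjoint (Cyl m) (Cyl n) := by
    intro m n h
    rw [Set.disjoint_left]
    intro ω hm hn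
    have h1 : ω m = pat m m := mem_cyl hm m (by omega)
    have h2 : ω (m+1) = pat m (m+1) := mem_cyl hm (m+1) (by omega)
    have h3 : ω m = pat n m := mem_cyl hn m (by omega)
    have h4 : ω (m+1) = pat n (m+1) := mem_cyl hn (m+1) (by omega)
    have hne := pat_ne n m h
    rw [pat_self] at h1
    rw [pat_succ_self] at h2
    rw [h1] at h3; rw [h2] at h4
    exact hne (h3.symm.trans h4)
  intro m n hmn
  rcases lt_or_gt_of_ne hmn with h | h
  · exact key m n h
  · exact (key n m h).symm

lemma cyl_subset_awins (n : ℕ) : Cyl n ⊆ {ω | AWins ω} := by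
  intro ω hω
  have hmain : ω n = ω (n+1) := by
    rw [mem_cyl hω n (by omega), mem_cyl hω (n+1) le_rfl, pat_self, pat_succ_self]
  have hex : ∃ k, ω k = ω (k+1) := ⟨n, hmain⟩
  refine ⟨hex, ?_⟩
  have hfind : Nat.find hex = n := by
    rw [Nat.find_eq_iff]
    refine ⟨hmain, fun k hk hke => ?_⟩
    have h1 : ω k = pat n k := mem_cyl hω k (by omega)
    have h2 : ω (k+1) = pat n (k+1) := mem_cyl hω (k+1) (by omega)
    exact pat_ne n k hk (by rw [← h1, ← h2, hke])
  rw [hfind, mem_cyl hω n (by omega), pat_self]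

variable (p q : ℝ≥0∞)

/-- The cylinder product value. -/
noncomputable def cylProd (n : ℕ) : ℝ≥0∞ :=
  ∏ i ∈ Finset.range (n+2), (if pat n i then p else q)

lemma cylProd_step (n : ℕ) : cylProd p q (n+2) = p * q * cylProd p q n := by
  have hshift : ∀ i, pat (n+2) (i+2) = pat n i := by
    intro i; simp only [pat, decide_eq_decide]; omega
  have h0 : pat (n+2) 0 = decide (n % 2 = 0) := by
    simp only [pat]; rw [decide_eq_decide]; omega
  have h1 : pat (n+2) 1 = decide (n % 2 = 1) := by
    simp only [pat]; rw [decide_eq_decide]; omega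
  have h01 : ((if pat (n+2) 1 then p else q) * (if pat (n+2) 0 then p else q)) = p * q := by
    rw [h0, h1]
    rcases Nat.mod_two_eq_zero_or_one n with h | h <;> simp [h] <;> ring
  show (∏ i ∈ Finset.range (n+4), (if pat (n+2) i then p else q)) = _
  rw [Finset.prod_range_succ', Finset.prod_range_succ']
  simp only [hshift]
  rw [mul_assoc, h01, mul_comm]
  rfl

lemma cylProd_eq (n : ℕ) :
    cylProd p q n = p^2 * (p*q)^(n/2) * (if n % 2 = 0 then 1 else q) := by
  induction n using Nat.strong_induction_on with
  | _ n ih =>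
    match n with
    | 0 => simp [cylProd, Finset.prod_range_succ, pat]
    | 1 =>
      simp [cylProd, Finset.prod_range_succ, pat]
      ring
    | (m+2) =>
      rw [cylProd_step, ih m (by omega)]
      have h2 : (m+2)/2 = m/2 + 1 := by omega
      have h3 : (m+2) % 2 = m % 2 := by omega
      rw [h2, h3, pow_succ]
      ring

end PerFlipAux

open PerFlipAux

/-- A per-flip advantage yields a game advantage: if player A wins each flip
independently with probability `r ≥ 1/2`, then A wins the whole game with
probability at least `1/2`. -/
theorem per_flip_advantage_game_advantage
    (r : ℝ) (hr0 : 1 / 2 ≤ r) (hr1 : r ≤ 1)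
    (μ : Measure (ℕ → Bool)) (hμ : IsBernoulliProduct r μ) :
    1 / 2 ≤ μ {ω : ℕ → Bool | AWins ω} := by
  classical
  set p : ℝ≥0∞ := ENNReal.ofReal r with hp
  set q : ℝ≥0∞ := ENNReal.ofReal (1 - r) with hq
  have hr0' : (0:ℝ) ≤ r := by linarith
  have hrq : (0:ℝ) ≤ 1 - r := by linarith
  have hμCyl : ∀ n, μ (Cyl n) = cylProd p q n := fun n => hμ (Finset.range (n+2)) (pat n)
  have hsub : (⋃ n, Cyl n) ⊆ {ω | AWins ω} := Set.iUnion_subset cyl_subset_awins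
  have hkey : ∑' n, cylProd p q n ≤ μ {ω | AWins ω} := by
    calc ∑' n, cylProd p q n = ∑' n, μ (Cyl n) := by simp [hμCyl]
    _ = μ (⋃ n, Cyl n) := (measure_iUnion cyl_disjoint measurableSet_cyl).symm
    _ ≤ _ := measure_mono hsub
  refine le_trans ?_ hkey
  have hsum : ∑' n, cylProd p q n = (p^2 + p^2*q) * (1 - p*q)⁻¹ := by
    rw [← tsum_even_add_odd ENNReal.summable ENNReal.summable]
    have he : ∀ k, cylProd p q (2*k) = p^2 * (p*q)^k := by
      intro k; rw [cylProd_eq]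
      have h1 : 2*k/2 = k := by omega
      simp [h1, Nat.mul_mod_right]
    have ho : ∀ k, cylProd p q (2*k+1) = p^2*q * (p*q)^k := by
      intro k; rw [cylProd_eq]
      have h1 : (2*k+1)/2 = k := by omega
      have h2 : (2*k+1) % 2 = 1 := by omega
      rw [h1, h2]
      simp
      ring
    simp only [he, ho]
    rw [ENNReal.tsum_mul_left, ENNReal.tsum_mul_left, ENNReal.tsum_geometric]
    ring
  rw [hsum]
  have hpq : p * q = ENNReal.ofReal (r * (1-r)) := by
    rw [hp, hq, ← ENNReal.ofReal_mul hr0']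
  have hsub1 : 1 - p*q = ENNReal.ofReal (1 - r*(1-r)) := by
    rw [hpq, ← ENNReal.ofReal_one, ← ENNReal.ofReal_sub _ (by nlinarith)]
  have hne0 : 1 - p*q ≠ 0 := by
    rw [hsub1]; simp only [ne_eq, ENNReal.ofReal_eq_zero, not_le]; nlinarith
  have hnetop : 1 - p*q ≠ ⊤ := by rw [hsub1]; exact ENNReal.ofReal_ne_top
  rw [← div_eq_mul_inv, ENNReal.le_div_iff_mul_le (Or.inl hne0) (Or.inl hnetop)]
  have hhalf : (1/2 : ℝ≥0∞) = ENNReal.ofReal (1/2) := by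
    rw [one_div, one_div, ENNReal.ofReal_inv_of_pos (by norm_num), ENNReal.ofReal_ofNat]
  have hL : (1/2 : ℝ≥0∞) * (1 - p*q) = ENNReal.ofReal ((1/2) * (1 - r*(1-r))) := by
    rw [hsub1, hhalf, ← ENNReal.ofReal_mul (by norm_num)]
  have hR : p^2 + p^2*q = ENNReal.ofReal (r^2 + r^2*(1-r)) := by
    rw [hp, hq, ← ENNReal.ofReal_pow hr0', ← ENNReal.ofReal_mul (by positivity),
      ← ENNReal.ofReal_add (by positivity) (by positivity)]
  rw [hL, hR]
  apply ENNReal.ofReal_le_ofReal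
  nlinarith [mul_nonneg (by linarith : (0:ℝ) ≤ 2*r-1) (by nlinarith : (0:ℝ) ≤ 1 + r - r^2)]
end

section
/- Continuation value of the last-flip winner: under the infinite product measure μ = ⨂_{n∈ℕ} Bernoulli(1/2) on ℕ → Bool, define the shifted sequence ω̂ by ω̂ 0 = true and ω̂ (n+1) = ω n, modeling the situation where player A has just won the previous flip. Then the event that A wins the game from this position, namely {ω : ℕ → Bool | ∃ n, ω̂ n = ω̂ (n+1), and at the least such index n one has ω̂ n = true}, has μ-measure exactly 2/3, and the complementary event that B wins (i.e., at the least such index n one has ω̂ n = false) has μ-measure exactly 1/3. Consequently, with a pot of 6 bitcoins, the fair split after a failed renegotiation gives 6·(2/3) = 4 bitcoins to the winner of the last flip and 6·(1/3) = 2 bitcoins to the other player. -/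
open MeasureTheory

/-- Player B wins the game on outcome `ω`: there is some index `n` with
`ω n = ω (n+1)`, and at the least such index `n` one has `ω n = false`. -/
def BWins (ω : ℕ → Bool) : Prop :=
  ∃ h : ∃ n : ℕ, ω n = ω (n + 1), ω (Nat.find h) = false

/-- The shifted sequence `ω̂` modeling the situation where player A has just won
the previous flip: `ω̂ 0 = true` and `ω̂ (n+1) = ω n`. -/
def shiftA (ω : ℕ → Bool) : ℕ → Bool
  | 0 => true
  | n + 1 => ω n

/-! ### auxiliary machinery -/

def fpat (n i : ℕ) : Bool := if i < n then !decide (Even i) else decide (Even n)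

def Ecyl (n : ℕ) : Set (ℕ → Bool) := {ω | ∀ i ∈ Finset.range (n + 1), ω i = fpat n i}

lemma decide_even_succ (j : ℕ) : decide (Even (j + 1)) = !decide (Even j) := by
  simp only [Nat.even_add_one, decide_not]

lemma alt_shift (ω : ℕ → Bool) (h : ∃ m, shiftA ω m = shiftA ω (m + 1)) :
    ∀ j, j ≤ Nat.find h → shiftA ω j = decide (Even j) := by
  intro j
  induction j with
  | zero => intro _; simp [shiftA]
  | succ j ih =>
    intro hj
    have hjle : j ≤ Nat.find h := le_trans (Nat.le_succ j) hj
    have hne : ¬ (shiftA ω j = shiftA ω (j + 1)) := Nat.find_min h (lt_of_lt_of_le (Nat.lt_succ_self j) hj)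
    have hval := ih hjle
    rw [decide_even_succ]
    cases hb : shiftA ω (j + 1) <;> cases hc : shiftA ω j <;> simp_all [Nat.even_iff, Nat.odd_iff]

lemma mem_Ecyl_find (ω : ℕ → Bool) (h : ∃ m, shiftA ω m = shiftA ω (m + 1)) :
    ω ∈ Ecyl (Nat.find h) := by
  intro i hi
  rw [Finset.mem_range] at hi
  unfold fpat
  rcases lt_or_ge i (Nat.find h) with hlt | hge
  · rw [if_pos hlt]
    have : shiftA ω (i + 1) = decide (Even (i + 1)) := alt_shift ω h (i + 1) hlt
    rw [show shiftA ω (i + 1) = ω i from rfl] at this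
    rw [this, decide_even_succ]
  · have hi' : i = Nat.find h := le_antisymm (Nat.lt_succ_iff.mp hi) hge
    rw [hi', if_neg (lt_irrefl _)]
    exact (Nat.find_spec h).symm.trans (alt_shift ω h _ le_rfl)

lemma shift_val_of_mem {ω : ℕ → Bool} {n : ℕ} (hω : ω ∈ Ecyl n) :
    ∀ j ≤ n, shiftA ω j = decide (Even j) := by
  intro j hj
  cases j with
  | zero => simp [shiftA]
  | succ i =>
    have hi : i ∈ Finset.range (n + 1) := by
      rw [Finset.mem_range]; omega
    have := hω i hi
    rw [show shiftA ω (i + 1) = ω i from rfl, this, fpat, if_pos (by omega : i < n),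
      decide_even_succ]

lemma find_of_mem_Ecyl {ω : ℕ → Bool} {n : ℕ} (hω : ω ∈ Ecyl n) :
    ∃ h : ∃ m, shiftA ω m = shiftA ω (m + 1), Nat.find h = n := by
  have hlast : shiftA ω (n + 1) = decide (Even n) := by
    have hn : n ∈ Finset.range (n + 1) := by rw [Finset.mem_range]; omega
    have := hω n hn
    rw [show shiftA ω (n + 1) = ω n from rfl, this, fpat, if_neg (lt_irrefl _)]
  have hp : shiftA ω n = shiftA ω (n + 1) := by
    rw [hlast, shift_val_of_mem hω n le_rfl]
  refine ⟨⟨n, hp⟩, ?_⟩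
  rw [Nat.find_eq_iff]
  refine ⟨hp, fun m hm => ?_⟩
  rw [shift_val_of_mem hω m (by omega), shift_val_of_mem hω (m + 1) (by omega),
    decide_even_succ]
  cases hb : decide (Even m) <;> simp

lemma Ecyl_disjoint : ∀ m n : ℕ, m ≠ n → Disjoint (Ecyl m) (Ecyl n) := by
  intro m n hmn
  rw [Set.disjoint_left]
  intro ω hm hn
  obtain ⟨h1, hf1⟩ := find_of_mem_Ecyl hm
  obtain ⟨h2, hf2⟩ := find_of_mem_Ecyl hn
  exact hmn (hf1 ▸ hf2 ▸ rfl)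

lemma Ecyl_measurable (n : ℕ) : MeasurableSet (Ecyl n) := by
  have : Ecyl n = ⋂ i ∈ Finset.range (n + 1), (fun ω : ℕ → Bool => ω i) ⁻¹' {fpat n i} := by
    ext ω; simp [Ecyl]
  rw [this]
  exact MeasurableSet.biInter (Set.to_countable _)
    (fun i _ => (measurable_pi_apply i) (measurableSet_singleton _))

lemma Ecyl_measure {μ : Measure (ℕ → Bool)} (hμ : IsFairBernoulliProduct μ) (n : ℕ) :
    μ (Ecyl n) = (1 / 2 : ENNReal) ^ (n + 1) := by
  have := hμ (Finset.range (n + 1)) (fpat n)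
  rwa [Finset.card_range] at this

lemma setA_eq : {ω : ℕ → Bool | AWins (shiftA ω)} = ⋃ k, Ecyl (2 * k) := by
  ext ω
  simp only [Set.mem_setOf_eq, Set.mem_iUnion, AWins]
  constructor
  · rintro ⟨h, htr⟩
    have hval := alt_shift ω h (Nat.find h) le_rfl
    rw [htr] at hval
    have heven : Even (Nat.find h) := by
      by_contra hc; simp [hc] at hval
    obtain ⟨r, hr⟩ := heven
    exact ⟨r, by rw [two_mul, ← hr]; exact mem_Ecyl_find ω h⟩
  · rintro ⟨k, hk⟩
    obtain ⟨h, hf⟩ := find_of_mem_Ecyl hk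
    refine ⟨h, ?_⟩
    rw [alt_shift ω h (Nat.find h) le_rfl, hf]
    simp [Nat.even_iff]

lemma setB_eq : {ω : ℕ → Bool | BWins (shiftA ω)} = ⋃ k, Ecyl (2 * k + 1) := by
  ext ω
  simp only [Set.mem_setOf_eq, Set.mem_iUnion, BWins]
  constructor
  · rintro ⟨h, htr⟩
    have hval := alt_shift ω h (Nat.find h) le_rfl
    rw [htr] at hval
    have hodd : ¬ Even (Nat.find h) := by
      by_contra hc; simp [hc] at hval
    rw [Nat.not_even_iff_odd] at hodd
    obtain ⟨r, hr⟩ := hodd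
    exact ⟨r, by rw [← hr]; exact mem_Ecyl_find ω h⟩
  · rintro ⟨k, hk⟩
    obtain ⟨h, hf⟩ := find_of_mem_Ecyl hk
    refine ⟨h, ?_⟩
    rw [alt_shift ω h (Nat.find h) le_rfl, hf]
    simp [Nat.even_iff]

lemma half_sq : ((1 : ENNReal) / 2) ^ 2 = 1 / 4 := by
  rw [one_div, one_div, ← ENNReal.inv_pow]
  norm_num

lemma sub_quarter : ((1 : ENNReal) - 1 / 4) = 3 / 4 := by
  refine ENNReal.sub_eq_of_eq_add (by norm_num) ?_
  rw [ENNReal.div_add_div_same, show (3 : ENNReal) + 1 = 4 by norm_num]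
  exact (ENNReal.div_self (a := 4) (by norm_num) (by norm_num)).symm

lemma arithA : ((1 : ENNReal) - 1 / 4)⁻¹ * (1 / 2) = 2 / 3 := by
  rw [sub_quarter, ENNReal.inv_div (Or.inr (by norm_num)) (Or.inr (by norm_num)), one_div,
    ← ENNReal.mul_div_right_comm]
  rw [show (4 : ENNReal) = 2 * 2 by norm_num, mul_assoc,
    ENNReal.mul_inv_cancel (by norm_num) (by norm_num), mul_one]

lemma arithB : ((1 : ENNReal) - 1 / 4)⁻¹ * (1 / 4) = 1 / 3 := by
  rw [sub_quarter, ENNReal.inv_div (Or.inr (by norm_num)) (Or.inr (by norm_num)), one_div,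
    ← ENNReal.mul_div_right_comm,
    ENNReal.mul_inv_cancel (by norm_num) (by norm_num)]

/-- Continuation value of the last-flip winner: if player A has just won a flip,
then A wins the game with probability `2/3` and B with probability `1/3`;
consequently, with a pot of 6 bitcoins, the fair split gives `6·(2/3) = 4`
bitcoins to the winner of the last flip and `6·(1/3) = 2` to the other player. -/
theorem continuation_value_last_flip_winner
    (μ : Measure (ℕ → Bool)) (hμ : IsFairBernoulliProduct μ) :
    μ {ω : ℕ → Bool | AWins (shiftA ω)} = 2 / 3 ∧
    μ {ω : ℕ → Bool | BWins (shiftA ω)} = 1 / 3 ∧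
    (6 : ℝ) * (2 / 3) = 4 ∧ (6 : ℝ) * (1 / 3) = 2 := by
  refine ⟨?_, ?_, by norm_num, by norm_num⟩
  · rw [setA_eq, measure_iUnion (fun i j hij => Ecyl_disjoint _ _ (by omega))
      (fun k => Ecyl_measurable _)]
    have h1 : ∀ k : ℕ, μ (Ecyl (2 * k)) = (((1 : ENNReal) / 2) ^ 2) ^ k * (1 / 2) := by
      intro k
      rw [Ecyl_measure hμ, pow_succ, pow_mul]
    rw [tsum_congr h1, ENNReal.tsum_mul_right, ENNReal.tsum_geometric, half_sq, arithA]
  · rw [setB_eq, measure_iUnion (fun i j hij => Ecyl_disjoint _ _ (by omega))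
      (fun k => Ecyl_measurable _)]
    have h1 : ∀ k : ℕ, μ (Ecyl (2 * k + 1)) = (((1 : ENNReal) / 2) ^ 2) ^ k * (1 / 2) ^ 2 := by
      intro k
      rw [Ecyl_measure hμ, show 2 * k + 1 + 1 = 2 * k + 2 by ring, pow_add, pow_mul]
    rw [tsum_congr h1, ENNReal.tsum_mul_right, ENNReal.tsum_geometric, half_sq, arithB]
end

section
/- Non-negative expected payoff of a rational player (Theorem 2, quantitative form): for every real r with 1/2 ≤ r ≤ 1, under the infinite product measure μ_r = ⨂_{n∈ℕ} Bernoulli(r) on ℕ → Bool, let W be the event that player A wins the game, namely {ω : ℕ → Bool | ∃ n, ω n = ω (n+1), and at the least such index n one has ω n = true}. Then the expected payoff ∫ (6·1_W(ω) − 3) dμ_r(ω) = 6·μ_r(W) − 3 is non-negative; in particular, for r = 1/2 it equals 0. -/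
open MeasureTheory Finset

/-- winning pattern of A for a first repeat at index n -/
def gpat (n i : ℕ) : Bool := decide (i % 2 = n % 2 ∨ i = n + 1)

lemma card_parity (m N : ℕ) :
    #((Finset.range N).filter (fun i => i % 2 = m % 2)) = (N + 1 - m % 2) / 2 := by
  induction N with
  | zero => simp; omega
  | succ N ih =>
    rw [Finset.range_add_one, Finset.filter_insert]
    split_ifs with h
    · rw [Finset.card_insert_of_notMem (by simp), ih]; omega
    · rw [ih]; omega

lemma cardA (n : ℕ) :
    #((Finset.range (n+2)).filter (fun i => gpat n i = true)) = n / 2 + 2 := by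
  have : ((Finset.range (n+2)).filter (fun i => gpat n i = true)) =
      ((Finset.range (n+2)).filter (fun i => i % 2 = n % 2 ∨ i = n + 1)) := by
    apply Finset.filter_congr; intro i _; simp [gpat]
  rw [this, Finset.filter_or, Finset.card_union_of_disjoint, Finset.filter_eq']
  · rw [if_pos (by simp [Finset.mem_range]), card_parity, Finset.card_singleton]
    omega
  · rw [Finset.disjoint_left]
    intro a ha hb
    simp only [Finset.mem_filter, Finset.mem_range] at ha hb
    omega

lemma cardB (n : ℕ) :
    #((Finset.range (n+2)).filter (fun i => ¬ gpat n i = true)) = (n + 1) / 2 := by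
  have h := Finset.card_filter_add_card_filter_not (s := Finset.range (n+2))
    (fun i => gpat n i = true)
  rw [cardA] at h
  rw [Finset.card_range] at h
  omega

def Cyl (n : ℕ) : Set (ℕ → Bool) := {ω | ∀ i ∈ Finset.range (n+2), ω i = gpat n i}

lemma awins_eq_iUnion : {ω : ℕ → Bool | AWins ω} = ⋃ n, Cyl n := by
  ext ω
  simp only [Set.mem_setOf_eq, Set.mem_iUnion]
  constructor
  · rintro ⟨h, htrue⟩
    set n := Nat.find h with hn
    refine ⟨n, ?_⟩
    have hrep : ω n = ω (n+1) := Nat.find_spec h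
    have hmin : ∀ m < n, ω m ≠ ω (m+1) := fun m hm => Nat.find_min h hm
    -- alternation claim
    have claim : ∀ d i, i + d = n → ω i = decide (i % 2 = n % 2) := by
      intro d
      induction d with
      | zero =>
        intro i hi
        have hin : i = n := by omega
        rw [hin, htrue]
        simp
      | succ d ih =>
        intro i hi
        have h1 : ω (i+1) = decide ((i+1) % 2 = n % 2) := ih (i+1) (by omega)
        have h2 : ω i ≠ ω (i+1) := hmin i (by omega)
        rw [h1] at h2
        cases hv : ω i <;> simp_all <;> omega
      -- end
    intro i hi
    rw [Finset.mem_range] at hi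
    rcases Nat.lt_or_ge i (n+1) with hlt | hge
    · have := claim (n - i) i (by omega)
      rw [this]
      simp [gpat]
      omega
    · have hi' : i = n + 1 := by omega
      subst hi'
      rw [← hrep, htrue]
      simp [gpat]
  · rintro ⟨n, hω⟩
    have hvals : ∀ i < n + 2, ω i = gpat n i := by
      intro i hi; exact hω i (Finset.mem_range.mpr hi)
    have hn1 : ω n = true := by rw [hvals n (by omega)]; simp [gpat]
    have hn2 : ω (n+1) = true := by rw [hvals (n+1) (by omega)]; simp [gpat]
    have hex : ∃ k, ω k = ω (k+1) := ⟨n, by rw [hn1, hn2]⟩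
    refine ⟨hex, ?_⟩
    have hfind : Nat.find hex = n := by
      rw [Nat.find_eq_iff]
      refine ⟨by rw [hn1, hn2], ?_⟩
      intro m hm
      rw [hvals m (by omega), hvals (m+1) (by omega)]
      simp only [gpat, decide_eq_decide]
      intro hc
      omega
    rw [hfind, hn1]

lemma cyl_disjoint : Pairwise (Function.onFun Disjoint Cyl) := by
  have key : ∀ m n : ℕ, m < n → Disjoint (Cyl m) (Cyl n) := by
    intro m n hmn
    rw [Set.disjoint_left]
    rintro ω hm hn
    have h1 : ω m = true := by rw [hm m (Finset.mem_range.mpr (by omega))]; simp [gpat]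
    have h2 : ω (m+1) = true := by
      rw [hm (m+1) (Finset.mem_range.mpr (by omega))]; simp [gpat]
    have h3 : ω m = gpat n m := hn m (Finset.mem_range.mpr (by omega))
    have h4 : ω (m+1) = gpat n (m+1) := hn (m+1) (Finset.mem_range.mpr (by omega))
    rw [h1] at h3; rw [h2] at h4
    simp [gpat, decide_eq_true_eq] at h3 h4
    omega
  intro m n hmn
    ;exact (Nat.lt_or_ge m n).elim (fun h => key m n h)
      (fun h => (key n m (by omega)).symm)

lemma cyl_measurable (n : ℕ) : MeasurableSet (Cyl n) := by
  have : Cyl n = ⋂ i ∈ Finset.range (n+2), {ω : ℕ → Bool | ω i = gpat n i} := by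
    ext ω; simp [Cyl]
  rw [this]
  refine MeasurableSet.biInter (Finset.range (n+2)).countable_toSet (fun i _ => ?_)
  have h : {ω : ℕ → Bool | ω i = gpat n i} = (fun ω : ℕ → Bool => ω i) ⁻¹' {gpat n i} := by
    ext ω; simp
  rw [h]
  exact (measurable_pi_apply i) (measurableSet_singleton _)

lemma cyl_measure {r : ℝ} {μ : MeasureTheory.Measure (ℕ → Bool)} (hμ : IsBernoulliProduct r μ) (n : ℕ) :
    μ (Cyl n) = (ENNReal.ofReal r) ^ (n/2+2) * (ENNReal.ofReal (1-r)) ^ ((n+1)/2) := by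
  have h := hμ (Finset.range (n+2)) (gpat n)
  rw [Finset.prod_ite] at h
  rw [Finset.prod_const, Finset.prod_const, cardA, cardB] at h
  exact h

lemma measure_awins {r : ℝ} {μ : MeasureTheory.Measure (ℕ → Bool)}
    (hr0 : 0 ≤ r) (hr1 : r ≤ 1) (hμ : IsBernoulliProduct r μ) :
    μ {ω : ℕ → Bool | AWins ω} =
      ENNReal.ofReal (r^2 * (2-r) * (1 - r*(1-r))⁻¹) := by
  set P := ENNReal.ofReal r with hP
  set Q := ENNReal.ofReal (1-r) with hQ
  have hq0 : (0:ℝ) ≤ 1 - r := by linarith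
  have hB : (0:ℝ) < 1 - r*(1-r) := by nlinarith
  have hsum : μ {ω : ℕ → Bool | AWins ω} = ∑' n, P ^ (n/2+2) * Q ^ ((n+1)/2) := by
    rw [awins_eq_iUnion, MeasureTheory.measure_iUnion cyl_disjoint cyl_measurable]
    exact tsum_congr (fun n => cyl_measure hμ n)
  rw [hsum, ← tsum_even_add_odd ENNReal.summable ENNReal.summable]
  have he : ∀ k : ℕ, P ^ ((2*k)/2+2) * Q ^ ((2*k+1)/2) = P^2 * (P*Q)^k := by
    intro k
    have h1 : (2*k)/2 = k := by omega
    have h2 : (2*k+1)/2 = k := by omega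
    rw [h1, h2, mul_pow, pow_add]; ring
  have ho : ∀ k : ℕ, P ^ ((2*k+1)/2+2) * Q ^ ((2*k+1+1)/2) = (P^2*Q) * (P*Q)^k := by
    intro k
    have h1 : (2*k+1)/2 = k := by omega
    have h2 : (2*k+1+1)/2 = k+1 := by omega
    rw [h1, h2, mul_pow, pow_add, pow_add]; ring
  calc (∑' k, P ^ ((2*k)/2+2) * Q ^ ((2*k+1)/2))
        + ∑' k, P ^ ((2*k+1)/2+2) * Q ^ ((2*k+1+1)/2)
      = P^2 * (1 - P*Q)⁻¹ + (P^2*Q) * (1 - P*Q)⁻¹ := by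
        rw [tsum_congr he, tsum_congr ho, ENNReal.tsum_mul_left, ENNReal.tsum_mul_left,
          ENNReal.tsum_geometric]
    _ = (P^2 + P^2*Q) * (1 - P*Q)⁻¹ := by ring
    _ = ENNReal.ofReal (r^2 * (2-r)) * (ENNReal.ofReal (1 - r*(1-r)))⁻¹ := by
        congr 1
        · rw [hP, hQ, ← ENNReal.ofReal_pow hr0, ← ENNReal.ofReal_mul (by positivity),
            ← ENNReal.ofReal_add (by positivity) (by positivity),
            show r^2 + r^2*(1-r) = r^2*(2-r) by ring]
        · congr 1
          rw [hP, hQ, ← ENNReal.ofReal_mul hr0, ← ENNReal.ofReal_one,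
            ← ENNReal.ofReal_sub _ (by nlinarith)]
    _ = ENNReal.ofReal (r^2 * (2-r) * (1 - r*(1-r))⁻¹) := by
        rw [ENNReal.ofReal_mul (by nlinarith : (0:ℝ) ≤ r^2*(2-r)),
          ENNReal.ofReal_inv_of_pos hB]

/-- Non-negative expected payoff of a rational player: if A wins each flip with
probability `r ≥ 1/2`, then A's expected payoff
`∫ (6·1_W(ω) − 3) dμ_r(ω) = 6·μ_r(W) − 3` is non-negative, where `W` is the
event that A wins the game; for `r = 1/2` it equals `0`. -/
theorem rational_player_nonneg_payoff
    (r : ℝ) (hr0 : 1 / 2 ≤ r) (hr1 : r ≤ 1)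
    (μ : Measure (ℕ → Bool)) (hμ : IsBernoulliProduct r μ) :
    (∫ ω, (6 * Set.indicator {ω : ℕ → Bool | AWins ω} (fun _ => (1 : ℝ)) ω - 3) ∂μ
        = 6 * (μ {ω : ℕ → Bool | AWins ω}).toReal - 3) ∧
    (0 ≤ 6 * (μ {ω : ℕ → Bool | AWins ω}).toReal - 3) ∧
    (r = 1 / 2 →
      ∫ ω, (6 * Set.indicator {ω : ℕ → Bool | AWins ω} (fun _ => (1 : ℝ)) ω - 3) ∂μ
        = 0) := by
  have hr0' : (0:ℝ) ≤ r := by linarith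
  have hq0 : (0:ℝ) ≤ 1 - r := by linarith
  have hB : (0:ℝ) < 1 - r*(1-r) := by nlinarith
  have hW : MeasurableSet {ω : ℕ → Bool | AWins ω} := by
    rw [awins_eq_iUnion]; exact MeasurableSet.iUnion cyl_measurable
  have hprob : IsProbabilityMeasure μ := by
    constructor
    have h := hμ ∅ (fun _ => true)
    simpa using h
  have hval : (μ {ω : ℕ → Bool | AWins ω}).toReal = r^2 * (2-r) * (1 - r*(1-r))⁻¹ := by
    rw [measure_awins hr0' hr1 hμ, ENNReal.toReal_ofReal (mul_nonneg (by nlinarith) (by positivity))]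
  have hint : ∫ ω, (6 * Set.indicator {ω : ℕ → Bool | AWins ω} (fun _ => (1 : ℝ)) ω - 3) ∂μ
      = 6 * (μ {ω : ℕ → Bool | AWins ω}).toReal - 3 := by
    have hind : Integrable (Set.indicator {ω : ℕ → Bool | AWins ω} (fun _ => (1 : ℝ))) μ :=
      (integrable_const (1:ℝ)).indicator hW
    rw [integral_sub (hind.const_mul 6) (integrable_const 3), integral_const_mul 6 _,
      MeasureTheory.integral_indicator_const (1:ℝ) hW, integral_const]
    simp [measure_univ, measureReal_def]
  refine ⟨hint, ?_, ?_⟩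
  · rw [hval]
    have key : (0:ℝ) ≤ 2*(r^2*(2-r)) - (1 - r*(1-r)) := by
      nlinarith [mul_nonneg (by linarith : (0:ℝ) ≤ 2*r-1) (by nlinarith : (0:ℝ) ≤ 1 + r - r^2)]
    have h6 : 6 * (r^2 * (2-r) * (1 - r*(1-r))⁻¹) - 3
        = (2*(r^2*(2-r)) - (1 - r*(1-r))) * 3 * (1 - r*(1-r))⁻¹ := by
      field_simp
      ring
    rw [h6]
    positivity
  · intro hr
    rw [hint, hval, hr]
    norm_num
end
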